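/- For every prime power q and every m ≥ 1, the covering radius of R_q(1,m) satisfies ρ(1,m) ≥ (q-1)q^{m-1} − q^{⌈m/2⌉−1}. -/

import Mathlib

open Polynomial Finset

section Generic
variable {α β : Type*} [Fintype α] [Fintype β]

lemma card_filter_prod (P : α × β → Prop) [DecidablePred P] :
    (Finset.univ.filter P).card = ∑ a : α, (Finset.univ.filter fun b => P (a, b)).card := by
  classical
  rw [Finset.card_eq_sum_card_fiberwise (f := Prod.fst) (t := Finset.univ)
    (fun _ _ => Finset.mem_univ _)]
  refine Finset.sum_congr rfl fun a _ => ?_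
  refine Finset.card_nbij' (fun x => x.2) (fun b => (a, b)) ?_ ?_ ?_ ?_
  · rintro ⟨x1, x2⟩ hx
    simp only [Finset.mem_coe, Finset.mem_filter, Finset.mem_univ, true_and] at hx ⊢
    obtain ⟨h1, h2⟩ := hx
    subst h2
    exact h1
  · intro b hb
    simp only [Finset.mem_coe, Finset.mem_filter, Finset.mem_univ, true_and] at hb ⊢
    exact ⟨hb, trivial⟩
  · rintro ⟨x1, x2⟩ hx
    simp only [Finset.mem_coe, Finset.mem_filter, Finset.mem_univ, true_and] at hx
    obtain ⟨h1, h2⟩ := hx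
    subst h2
    rfl
  · intro b _
    rfl

lemma sum_filter_snd_eq [DecidableEq β] (a : β) (h : α × β → ℕ) :
    ∑ w ∈ Finset.univ.filter (fun w : α × β => w.2 = a), h w = ∑ s : α, h (s, a) := by
  classical
  refine Finset.sum_nbij' (fun w => w.1) (fun s => (s, a)) ?_ ?_ ?_ ?_ ?_
  · intro w hw
    exact Finset.mem_univ _
  · intro s _
    simp
  · rintro ⟨w1, w2⟩ hw
    simp only [Finset.mem_filter] at hw
    obtain ⟨-, h2⟩ := hw
    subst h2
    rfl
  · intro s _
    rfl
  · rintro ⟨w1, w2⟩ hw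
    simp only [Finset.mem_filter] at hw
    obtain ⟨-, h2⟩ := hw
    subst h2
    rfl

lemma card_filter_equiv {P : β → Prop} [DecidablePred P] (e : α ≃ β) :
    (Finset.univ.filter fun a => P (e a)).card = (Finset.univ.filter P).card := by
  refine Finset.card_equiv e (fun i => ?_)
  simp

end Generic

section FF
variable {F : Type} [Field F] [Fintype F] [DecidableEq F]

/-- fibers of a nonzero linear functional `x ↦ ∑ x i * y i` have card `q^(j-1)`,
stated multiplicatively. -/
lemma fiber_card_mul {j : ℕ} (y : Fin j → F) (hy : y ≠ 0) (t : F) :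
    (Finset.univ.filter (fun x : Fin j → F => ∑ i, x i * y i = t)).card * Fintype.card F
      = Fintype.card F ^ j := by
  classical
  obtain ⟨i₀, hi₀⟩ : ∃ i, y i ≠ 0 := by
    by_contra h
    push_neg at h
    exact hy (funext h)
  have key : ∀ t' : F,
      (Finset.univ.filter (fun x : Fin j → F => ∑ i, x i * y i = t')).card
        = (Finset.univ.filter (fun x : Fin j → F => ∑ i, x i * y i = t)).card := by
    intro t'
    set v : Fin j → F := (fun i => if i = i₀ then (t' - t) * (y i₀)⁻¹ else 0) with hv
    have hsumv : ∑ i, v i * y i = t' - t := by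
      rw [Finset.sum_eq_single i₀]
      · simp only [hv, if_pos rfl]
        field_simp
      · intro i _ hne
        simp [hv, hne]
      · intro h; exact absurd (Finset.mem_univ i₀) h
    have haddsum : ∀ x : Fin j → F, ∑ i, (x + v) i * y i = (∑ i, x i * y i) + (t' - t) := by
      intro x
      rw [← hsumv, ← Finset.sum_add_distrib]
      refine Finset.sum_congr rfl fun i _ => ?_
      simp [add_mul]
    rw [← card_filter_equiv (P := fun x : Fin j → F => ∑ i, x i * y i = t')
      (Equiv.addRight v)]
    refine Finset.card_nbij' id id ?_ ?_ ?_ ?_ <;> intro x hx <;>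
      simp only [Finset.mem_coe, Finset.mem_filter, Finset.mem_univ, true_and] at hx ⊢ <;>
      simp only [Equiv.coe_addRight, id_eq] at hx ⊢
    · rw [haddsum] at hx
      linear_combination hx
    · rw [haddsum]
      rw [hx]
      ring
  have total : ∑ t' : F, (Finset.univ.filter
      (fun x : Fin j → F => ∑ i, x i * y i = t')).card = Fintype.card F ^ j := by
    rw [← Finset.card_eq_sum_card_fiberwise (f := fun x : Fin j → F => ∑ i, x i * y i)
      (t := Finset.univ) (fun _ _ => Finset.mem_univ _)]
    simp [Fintype.card_fun]
  calc (Finset.univ.filter (fun x : Fin j → F => ∑ i, x i * y i = t)).card * Fintype.card F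
      = ∑ t' : F, (Finset.univ.filter (fun x : Fin j → F => ∑ i, x i * y i = t')).card := by
        rw [Finset.sum_congr rfl (fun t' _ => key t')]
        simp [mul_comm]
    _ = Fintype.card F ^ j := total

lemma exists_irred_quadratic :
    ∃ c : F, Irreducible (Polynomial.X ^ 2 + Polynomial.X - Polynomial.C c)
      ∧ (Polynomial.X ^ 2 + Polynomial.X - Polynomial.C c : Polynomial F).natDegree = 2 := by
  classical
  have hns : ¬ Function.Surjective (fun z : F => z ^ 2 + z) := by
    intro hs
    have hinj : Function.Injective (fun z : F => z ^ 2 + z) :=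
      Finite.injective_iff_surjective.mpr hs
    have h01 : (fun z : F => z ^ 2 + z) 0 = (fun z : F => z ^ 2 + z) (-1) := by ring_nf
    have := hinj h01
    exact one_ne_zero (neg_eq_zero.mp this.symm)
  simp only [Function.Surjective, not_forall] at hns
  obtain ⟨c, hc⟩ := hns
  push_neg at hc
  refine ⟨c, ?_, ?_⟩
  case refine_2 =>
    have h : (Polynomial.X ^ 2 + Polynomial.X - Polynomial.C c : Polynomial F)
        = Polynomial.C 1 * Polynomial.X ^ 2 + Polynomial.C 1 * Polynomial.X
          + Polynomial.C (-c) := by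
      simp [sub_eq_add_neg]
    rw [h, Polynomial.natDegree_quadratic one_ne_zero]
  have hdeg : (Polynomial.X ^ 2 + Polynomial.X - Polynomial.C c : F[X]).natDegree = 2 := by
    have h : (Polynomial.X ^ 2 + Polynomial.X - Polynomial.C c : F[X])
        = Polynomial.C 1 * Polynomial.X ^ 2 + Polynomial.C 1 * Polynomial.X
          + Polynomial.C (-c) := by
      simp [sub_eq_add_neg]
    rw [h, Polynomial.natDegree_quadratic one_ne_zero]
  rw [Polynomial.irreducible_iff_roots_eq_zero_of_degree_le_three (by omega) (by omega)]
  rw [Multiset.eq_zero_iff_forall_notMem]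
  intro z hz
  rw [Polynomial.mem_roots] at hz
  · have h2 := hz
    simp only [Polynomial.IsRoot, Polynomial.eval_sub, Polynomial.eval_add,
      Polynomial.eval_pow, Polynomial.eval_X, Polynomial.eval_C] at h2
    exact hc z (by linear_combination h2)
  · intro h0
    have := congrArg Polynomial.natDegree h0
    rw [hdeg] at this
    simp at this

end FF
section Ext
variable {F : Type} [Field F] [Fintype F] [DecidableEq F]
variable {E : Type} [Field E] [Algebra F E] [Fintype E] [DecidableEq E]

local notation "q" => Fintype.card F

lemma card_E (bE : Module.Basis (Fin 2) F E) : Fintype.card E = q ^ 2 := by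
  rw [Fintype.card_congr bE.equivFun.toEquiv]
  simp [Fintype.card_fun]

lemma frob_add (x y : E) : (x + y) ^ q = x ^ q + y ^ q := by
  obtain ⟨n, hp, hcard⟩ := FiniteField.card F (ringChar F)
  haveI := Fact.mk hp
  haveI : CharP E (ringChar F) := charP_of_injective_algebraMap (algebraMap F E).injective _
  rw [hcard]
  exact add_pow_char_pow ..

lemma alg_pow_q (s : F) : (algebraMap F E s) ^ q = algebraMap F E s := by
  rw [← map_pow, FiniteField.pow_card]

lemma pow_q_q (bE : Module.Basis (Fin 2) F E) (x : E) : (x ^ q) ^ q = x := by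
  rw [← pow_mul, ← pow_two, ← card_E bE, FiniteField.pow_card]

lemma linmap_exists (bE : Module.Basis (Fin 2) F E) (ψ : E →ₗ[F] E) :
    ∃ a b : E, ∀ u, ψ u = a * u + b * u ^ q := by
  haveI : Module.Finite F E := Module.Finite.of_basis bE
  have hfr : Module.finrank F E = 2 := by
    rw [Module.finrank_eq_card_basis bE, Fintype.card_fin]
  have h1q : 1 < q := Fintype.one_lt_card
  let mk : E → E → (E →ₗ[F] E) := fun a b =>
    { toFun := fun u => a * u + b * u ^ q
      map_add' := by
        intro u v
        show a * (u + v) + b * (u + v) ^ q = (a * u + b * u ^ q) + (a * v + b * v ^ q)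
        rw [frob_add]
        ring
      map_smul' := by
        intro s u
        show a * (s • u) + b * (s • u) ^ q = (RingHom.id F) s • (a * u + b * u ^ q)
        simp only [Algebra.smul_def, RingHom.id_apply, mul_pow, alg_pow_q]
        ring }
  let L : (E × E) →ₗ[F] (E →ₗ[F] E) :=
    { toFun := fun ab => mk ab.1 ab.2
      map_add' := by
        intro u v
        ext w
        show (u + v).1 * w + (u + v).2 * w ^ q = (u.1 * w + u.2 * w ^ q) + (v.1 * w + v.2 * w ^ q)
        simp only [Prod.fst_add, Prod.snd_add]
        ring
      map_smul' := by
        intro s ab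
        ext w
        show (s • ab).1 * w + (s • ab).2 * w ^ q = ((RingHom.id F) s • mk ab.1 ab.2) w
        have : ((RingHom.id F) s • mk ab.1 ab.2) w = s • (ab.1 * w + ab.2 * w ^ q) := rfl
        rw [this]
        simp only [Prod.smul_fst, Prod.smul_snd, smul_add, smul_mul_assoc] }
    -- injectivity
  have hinj : Function.Injective L := by
    rw [← LinearMap.ker_eq_bot, LinearMap.ker_eq_bot']
    rintro ⟨a, b⟩ hab
    have hall : ∀ u : E, a * u + b * u ^ q = 0 := by
      intro u
      have := congrArg (fun f : E →ₗ[F] E => f u) hab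
      simpa [L, mk] using this
    by_contra hne
    have hab0 : ¬ (a = 0 ∧ b = 0) := by
      intro ⟨h1, h2⟩
      exact hne (by simp [Prod.ext_iff, h1, h2])
    set P : Polynomial E := Polynomial.C a * Polynomial.X + Polynomial.C b * Polynomial.X ^ q
      with hP
    have hPne : P ≠ 0 := by
      intro h0
      apply hab0
      constructor
      · have h := congrArg (fun p => Polynomial.coeff p 1) h0
        simp only [hP, Polynomial.coeff_add, Polynomial.coeff_C_mul, Polynomial.coeff_X_one,
          mul_one, Polynomial.coeff_X_pow, Polynomial.coeff_zero] at h
        rwa [if_neg (by omega : ¬ (1 = q)), mul_zero, add_zero] at h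
      · have h := congrArg (fun p => Polynomial.coeff p q) h0
        simp only [hP, Polynomial.coeff_add, Polynomial.coeff_C_mul, Polynomial.coeff_X,
          Polynomial.coeff_X_pow, Polynomial.coeff_zero, if_pos rfl, mul_one] at h
        rw [if_neg (by omega : ¬ (1 = q)), mul_zero, zero_add] at h
        simpa using h
    have hdeg : P.natDegree ≤ q := by
      refine le_trans (Polynomial.natDegree_add_le _ _) (max_le ?_ ?_)
      · refine le_trans (Polynomial.natDegree_C_mul_le _ _) ?_
        rw [Polynomial.natDegree_X]
        omega
      · refine le_trans (Polynomial.natDegree_C_mul_le _ _) ?_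
        rw [Polynomial.natDegree_X_pow]
    have hsub : (Finset.univ : Finset E) ⊆ P.roots.toFinset := by
      intro u _
      rw [Multiset.mem_toFinset, Polynomial.mem_roots hPne]
      simp only [Polynomial.IsRoot, hP, Polynomial.eval_add, Polynomial.eval_mul,
        Polynomial.eval_C, Polynomial.eval_X, Polynomial.eval_pow]
      exact hall u
    have hcard := Finset.card_le_card hsub
    rw [Finset.card_univ, card_E bE] at hcard
    have h2 : P.roots.toFinset.card ≤ q := le_trans (Multiset.toFinset_card_le _)
      (le_trans (Polynomial.card_roots' P) hdeg)
    nlinarith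
  have hsurj : Function.Surjective L := by
    have heq : Module.finrank F (E × E) = Module.finrank F (E →ₗ[F] E) := by
      rw [Module.finrank_prod, Module.finrank_linearMap, hfr]
    exact (LinearMap.injective_iff_surjective_of_finrank_eq_finrank heq).mp hinj
  obtain ⟨⟨a, b⟩, hab⟩ := hsurj ψ
  refine ⟨a, b, fun u => ?_⟩
  rw [← hab]
  rfl

lemma count_pow_le (a b c : E) :
    (Finset.univ.filter (fun u : E => u ^ (q + 1) + (a * u + b * u ^ q) = c)).card ≤ q + 1 := by
  have h1q : 1 < q := Fintype.one_lt_card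
  set P : Polynomial E := Polynomial.X ^ (q + 1) + (Polynomial.C a * Polynomial.X
    + Polynomial.C b * Polynomial.X ^ q) - Polynomial.C c with hP
  have hcoeff : P.coeff (q + 1) = 1 := by
    simp [hP, Polynomial.coeff_X_pow, Polynomial.coeff_X, Polynomial.coeff_C,
      (by omega : ¬ (q + 1 = 1)), (by omega : ¬ (q + 1 = q)), (by omega : q + 1 ≠ 1),
      (by omega : ¬ (q + 1 = 0))]
  have hPne : P ≠ 0 := by
    intro h0
    rw [h0] at hcoeff
    simp at hcoeff
  have hdeg : P.natDegree ≤ q + 1 := by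
    refine le_trans (Polynomial.natDegree_sub_le _ _) (max_le ?_ (by simp))
    refine le_trans (Polynomial.natDegree_add_le _ _) (max_le (by simp) ?_)
    refine le_trans (Polynomial.natDegree_add_le _ _) (max_le ?_ ?_)
    · refine le_trans (Polynomial.natDegree_C_mul_le _ _) ?_
      rw [Polynomial.natDegree_X]
      omega
    · refine le_trans (Polynomial.natDegree_C_mul_le _ _) ?_
      rw [Polynomial.natDegree_X_pow]
      omega
  have hsub : Finset.univ.filter (fun u : E => u ^ (q + 1) + (a * u + b * u ^ q) = c)
      ⊆ P.roots.toFinset := by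
    intro u hu
    rw [Finset.mem_filter] at hu
    rw [Multiset.mem_toFinset, Polynomial.mem_roots hPne]
    simp only [Polynomial.IsRoot, hP, Polynomial.eval_sub, Polynomial.eval_add,
      Polynomial.eval_mul, Polynomial.eval_C, Polynomial.eval_X, Polynomial.eval_pow]
    linear_combination hu.2
  exact le_trans (Finset.card_le_card hsub) (le_trans (Multiset.toFinset_card_le _)
    (le_trans (Polynomial.card_roots' P) hdeg))

lemma mem_range_of_pow_q (x : E) (hx : x ^ q = x) : ∃ s : F, algebraMap F E s = x := by
  have h1q : 1 < q := Fintype.one_lt_card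
  set T : Finset E := Finset.univ.filter (fun x : E => x ^ q = x) with hT
  set R : Finset E := Finset.univ.image (algebraMap F E) with hR
  have hRT : R ⊆ T := by
    intro u hu
    rw [hR, Finset.mem_image] at hu
    obtain ⟨s, _, rfl⟩ := hu
    rw [hT, Finset.mem_filter]
    exact ⟨Finset.mem_univ _, alg_pow_q s⟩
  have hcardR : R.card = q := by
    rw [hR, Finset.card_image_of_injective _ (algebraMap F E).injective, Finset.card_univ]
  have hcardT : T.card ≤ q := by
    set P : Polynomial E := Polynomial.X ^ q - Polynomial.X with hP
    have hcoeff : P.coeff q = 1 := by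
      rw [hP, Polynomial.coeff_sub, Polynomial.coeff_X_pow, if_pos rfl, Polynomial.coeff_X,
        if_neg (by omega : ¬ (1 = q)), sub_zero]
    have hPne : P ≠ 0 := by
      intro h0
      rw [h0] at hcoeff
      simp at hcoeff
    have hdeg : P.natDegree ≤ q := by
      refine le_trans (Polynomial.natDegree_sub_le _ _) (max_le ?_ ?_)
      · rw [Polynomial.natDegree_X_pow]
      · rw [Polynomial.natDegree_X]
        omega
    have hsub : T ⊆ P.roots.toFinset := by
      intro u hu
      rw [hT, Finset.mem_filter] at hu
      rw [Multiset.mem_toFinset, Polynomial.mem_roots hPne]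
      simp only [Polynomial.IsRoot, hP, Polynomial.eval_sub, Polynomial.eval_pow,
        Polynomial.eval_X]
      rw [hu.2, sub_self]
    exact le_trans (Finset.card_le_card hsub) (le_trans (Multiset.toFinset_card_le _)
      (le_trans (Polynomial.card_roots' P) hdeg))
  have hTR : T = R := (Finset.eq_of_subset_of_card_le hRT (hcardT.trans hcardR.ge)).symm
  have hxT : x ∈ T := by
    rw [hT, Finset.mem_filter]
    exact ⟨Finset.mem_univ _, hx⟩
  rw [hTR, hR, Finset.mem_image] at hxT
  obtain ⟨s, _, hs⟩ := hxT
  exact ⟨s, hs⟩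

lemma countA (bE : Module.Basis (Fin 2) F E) (ν : E → F)
    (hν : ∀ z : E, algebraMap F E (ν z) = z ^ (q + 1)) (φ : E →ₗ[F] F) (c : F) :
    (Finset.univ.filter (fun z : E => ν z = φ z + c)).card ≤ q + 1 := by
  obtain ⟨a, b, hab⟩ := linmap_exists bE ((Algebra.linearMap F E).comp φ)
  have key : ∀ z : E, ν z = φ z + c ↔ z ^ (q + 1) + ((-a) * z + (-b) * z ^ q)
      = algebraMap F E c := by
    intro z
    rw [← (algebraMap F E).injective.eq_iff, hν, map_add]
    have := hab z
    simp only [LinearMap.comp_apply, Algebra.linearMap_apply] at this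
    rw [this]
    constructor
    · intro h; linear_combination h
    · intro h; linear_combination h
  rw [Finset.filter_congr (fun z _ => key z)]
  exact count_pow_le _ _ _

end Ext
section Master
variable {F : Type} [Field F] [Fintype F] [DecidableEq F]
variable {E : Type} [Field E] [Algebra F E] [Fintype E] [DecidableEq E]

local notation "q" => Fintype.card F

lemma master (bE : Module.Basis (Fin 2) F E) (ν : E → F)
    (hν : ∀ z : E, algebraMap F E (ν z) = z ^ (q + 1)) (j ε : ℕ)
    (φ : (((E × (Fin ε → F)) × (Fin j → F)) × (Fin j → F)) →ₗ[F] F) (b : F) :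
    (Finset.univ.filter (fun u : ((E × (Fin ε → F)) × (Fin j → F)) × (Fin j → F) =>
        ν u.1.1.1 + ∑ i, u.2 i * u.1.2 i = φ u + b)).card
      ≤ q ^ (2 * j + 1 + ε) + q ^ (j + ε) := by
  classical
  have h1q : 1 < q := Fintype.one_lt_card
  have hq0 : 0 < q := by omega
  -- the linear functional on the x-part
  set ℓ : (Fin j → F) →ₗ[F] F := φ.comp (LinearMap.inr F ((E × (Fin ε → F)) × (Fin j → F)) (Fin j → F)) with hℓ
  set a : Fin j → F := fun i => ℓ (fun k => if i = k then 1 else 0) with ha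
  have hℓsum : ∀ x : Fin j → F, ℓ x = ∑ i, x i * a i := by
    intro x
    rw [LinearMap.pi_apply_eq_sum_univ ℓ x]
    exact Finset.sum_congr rfl fun i _ => by rw [smul_eq_mul, ha]
  have hφdec : ∀ (w : ((E × (Fin ε → F)) × (Fin j → F))) (x : Fin j → F), φ (w, x) = φ (w, 0) + ℓ x := by
    intro w x
    rw [hℓ, LinearMap.comp_apply, LinearMap.inr_apply, ← map_add]
    congr 1
    simp
  set Cw : ((E × (Fin ε → F)) × (Fin j → F)) → F := fun w => φ (w, 0) + b - ν w.1.1 with hCw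
  have key : ∀ (w : ((E × (Fin ε → F)) × (Fin j → F))) (x : Fin j → F),
      (ν w.1.1 + ∑ i, x i * w.2 i = φ (w, x) + b) ↔
        (∑ i, x i * (w.2 i - a i) = Cw w) := by
    intro w x
    rw [hφdec, hℓsum, hCw]
    have hsplit : ∑ i, x i * (w.2 i - a i) = (∑ i, x i * w.2 i) - ∑ i, x i * a i := by
      rw [← Finset.sum_sub_distrib]
      exact Finset.sum_congr rfl fun i _ => by ring
    rw [hsplit]
    constructor
    · intro h; linear_combination h
    · intro h; linear_combination h
  -- turn into a sum over w of x-fiber counts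
  set cnt : ((E × (Fin ε → F)) × (Fin j → F)) → ℕ := fun w =>
    (Finset.univ.filter (fun x : Fin j → F => ∑ i, x i * (w.2 i - a i) = Cw w)).card with hcnt
  have hcount : (Finset.univ.filter (fun u : ((E × (Fin ε → F)) × (Fin j → F)) × (Fin j → F) =>
      ν u.1.1.1 + ∑ i, u.2 i * u.1.2 i = φ u + b)).card = ∑ w : ((E × (Fin ε → F)) × (Fin j → F)), cnt w := by
    rw [card_filter_prod (fun u : ((E × (Fin ε → F)) × (Fin j → F)) × (Fin j → F) =>
      ν u.1.1.1 + ∑ i, u.2 i * u.1.2 i = φ u + b)]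
    exact Finset.sum_congr rfl fun w _ => by
      rw [hcnt]
      congr 1
      exact Finset.filter_congr fun x _ => by
        simpa using (key w x)
  rw [hcount]
  -- multiply by q and bound
  refine Nat.le_of_mul_le_mul_right ?_ hq0
  -- split the sum according to w.2 = a
  rw [← Finset.sum_filter_add_sum_filter_not Finset.univ (fun w : ((E × (Fin ε → F)) × (Fin j → F)) => w.2 = a) cnt]
  -- part 1 : w.2 ≠ a
  have part1 : (∑ w ∈ Finset.univ.filter (fun w : ((E × (Fin ε → F)) × (Fin j → F)) => ¬ (w.2 = a)), cnt w) * q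
      = (Finset.univ.filter (fun w : ((E × (Fin ε → F)) × (Fin j → F)) => ¬ (w.2 = a))).card * q ^ j := by
    rw [Finset.sum_mul]
    rw [Finset.sum_congr rfl (fun w hw => ?_), Finset.sum_const, smul_eq_mul]
    rw [Finset.mem_filter] at hw
    have hy : (fun i => w.2 i - a i) ≠ 0 := by
      intro h0
      apply hw.2
      funext i
      have := congrFun h0 i
      simp only [Pi.zero_apply, sub_eq_zero] at this
      exact this
    rw [hcnt]
    exact fiber_card_mul _ hy _
  -- cardinality of the w.2 ≠ a part
  have hcardne : (Finset.univ.filter (fun w : ((E × (Fin ε → F)) × (Fin j → F)) => ¬ (w.2 = a))).card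
      = (q ^ 2 * q ^ ε) * (q ^ j - 1) := by
    rw [card_filter_prod (fun w : ((E × (Fin ε → F)) × (Fin j → F)) => ¬ (w.2 = a))]
    have hinner : ∀ s : E × (Fin ε → F), (Finset.univ.filter (fun y : (Fin j → F) => ¬ (y = a))).card
        = q ^ j - 1 := by
      intro s
      rw [Finset.filter_not, Finset.filter_eq', if_pos (Finset.mem_univ a)]
      rw [Finset.card_sdiff_of_subset (by simp), Finset.card_univ, Finset.card_singleton]
      congr 1
      show Fintype.card (Fin j → F) = q ^ j
      rw [Fintype.card_fun, Fintype.card_fin]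
    rw [Finset.sum_congr rfl (fun s _ => hinner s), Finset.sum_const, smul_eq_mul]
    congr 1
    show Fintype.card (E × (Fin ε → F)) = q ^ 2 * q ^ ε
    rw [Fintype.card_prod, card_E bE]
    congr 1
    show Fintype.card (Fin ε → F) = q ^ ε
    rw [Fintype.card_fun, Fintype.card_fin]
  -- part 2 : w.2 = a
  have part2 : ∑ w ∈ Finset.univ.filter (fun w : ((E × (Fin ε → F)) × (Fin j → F)) => w.2 = a), cnt w
      = (Finset.univ.filter (fun s : E × (Fin ε → F) => Cw (s, a) = 0)).card * q ^ j := by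
    rw [sum_filter_snd_eq a cnt]
    have hterm : ∀ s : E × (Fin ε → F), cnt (s, a) = if Cw (s, a) = 0 then q ^ j else 0 := by
      intro s
      simp only [hcnt]
      by_cases h : Cw (s, a) = 0
      · rw [if_pos h]
        rw [Finset.filter_true_of_mem]
        · rw [Finset.card_univ]
          show Fintype.card (Fin j → F) = q ^ j
          rw [Fintype.card_fun, Fintype.card_fin]
        · intro x _
          simpa using h.symm
      · rw [if_neg h]
        rw [Finset.filter_false_of_mem, Finset.card_empty]
        intro x _
        simp only [sub_self, mul_zero, Finset.sum_const_zero]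
        exact fun hc => h hc.symm
    rw [Finset.sum_congr rfl (fun s _ => hterm s), ← Finset.sum_filter, Finset.sum_const,
      smul_eq_mul]
  -- bound the (z, t) count
  set X₂ := (Finset.univ.filter (fun s : E × (Fin ε → F) => Cw (s, a) = 0)).card with hX₂
  set emb1 : E →ₗ[F] ((E × (Fin ε → F)) × (Fin j → F)) × (Fin j → F) :=
    (LinearMap.inl F ((E × (Fin ε → F)) × (Fin j → F)) (Fin j → F)) ∘ₗ (LinearMap.inl F (E × (Fin ε → F)) (Fin j → F)) ∘ₗ (LinearMap.inl F E (Fin ε → F))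
    with hemb1
  set embt : (Fin ε → F) →ₗ[F] ((E × (Fin ε → F)) × (Fin j → F)) × (Fin j → F) :=
    (LinearMap.inl F ((E × (Fin ε → F)) × (Fin j → F)) (Fin j → F)) ∘ₗ (LinearMap.inl F (E × (Fin ε → F)) (Fin j → F)) ∘ₗ (LinearMap.inr F E (Fin ε → F))
    with hembt
  set φ₁ : E →ₗ[F] F := φ ∘ₗ emb1 with hφ₁
  set δ : (Fin ε → F) →ₗ[F] F := φ ∘ₗ embt with hδ
  set K : F := φ (((0, 0), a), 0) with hK
  have hdec : ∀ (z : E) (t : (Fin ε → F)), φ (((z, t), a), (0 : Fin j → F)) = φ₁ z + δ t + K := by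
    intro z t
    have hsplit : (((z, t), a), (0 : Fin j → F))
        = (((z, (0 : (Fin ε → F))), (0 : (Fin j → F))), (0 : Fin j → F)) + ((((0 : E), t), (0 : (Fin j → F))), (0 : Fin j → F))
          + ((((0 : E), (0 : (Fin ε → F))), a), (0 : Fin j → F)) := by
      simp [Prod.ext_iff]
    rw [hsplit, map_add, map_add]
    rfl
  have hpred : ∀ (z : E) (t : (Fin ε → F)), (Cw ((z, t), a) = 0) ↔ (ν z = φ₁ z + δ t + (K + b)) := by
    intro z t
    rw [hCw]
    show φ (((z, t), a), (0 : Fin j → F)) + b - ν z = 0 ↔ _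
    rw [hdec]
    constructor
    · intro h; linear_combination -h
    · intro h; linear_combination -h
  set d : (Fin ε → F) := fun i => δ (fun k => if i = k then 1 else 0) with hd'
  have hδsum : ∀ t : (Fin ε → F), δ t = ∑ i, t i * d i := by
    intro t
    rw [LinearMap.pi_apply_eq_sum_univ δ t]
    exact Finset.sum_congr rfl fun i _ => by rw [smul_eq_mul, hd']
  have hX2q : X₂ * q ≤ (q + 1) * (q ^ ε * q) := by
    rw [hX₂, card_filter_prod (fun s : E × (Fin ε → F) => Cw (s, a) = 0)]
    by_cases hd : d = 0
    · -- δ = 0 : use the q+1 bound on the norm count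
      have hδ0 : ∀ t : (Fin ε → F), δ t = 0 := by
        intro t
        rw [hδsum]
        simp [hd]
      have hzcount : ∀ z : E, (Finset.univ.filter (fun t : (Fin ε → F) => Cw ((z, t), a) = 0)).card
          = if ν z = φ₁ z + (K + b) then q ^ ε else 0 := by
        intro z
        by_cases h : ν z = φ₁ z + (K + b)
        · rw [if_pos h, Finset.filter_true_of_mem, Finset.card_univ]
          · show Fintype.card (Fin ε → F) = q ^ ε
            rw [Fintype.card_fun, Fintype.card_fin]
          · intro t _
            rw [hpred, hδ0, add_zero]
            exact h
        · rw [if_neg h, Finset.filter_false_of_mem, Finset.card_empty]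
          intro t _
          rw [hpred, hδ0, add_zero]
          exact h
      rw [Finset.sum_congr rfl (fun z _ => hzcount z), ← Finset.sum_filter, Finset.sum_const,
        smul_eq_mul]
      have hA := countA bE ν hν φ₁ (K + b)
      calc (Finset.univ.filter (fun z : E => ν z = φ₁ z + (K + b))).card * q ^ ε * q
          ≤ (q + 1) * q ^ ε * q := by
            exact Nat.mul_le_mul_right _ (Nat.mul_le_mul_right _ hA)
        _ = (q + 1) * (q ^ ε * q) := by ring
    · -- δ ≠ 0 : fibers in t
      have hzcount : ∀ z : E, (Finset.univ.filter (fun t : (Fin ε → F) => Cw ((z, t), a) = 0)).card * q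
          = q ^ ε := by
        intro z
        have hcongr : (Finset.univ.filter (fun t : (Fin ε → F) => Cw ((z, t), a) = 0))
            = Finset.univ.filter (fun t : (Fin ε → F) => ∑ i, t i * d i = ν z - φ₁ z - (K + b)) := by
          refine Finset.filter_congr fun t _ => ?_
          rw [hpred, ← hδsum]
          constructor
          · intro h; linear_combination -h
          · intro h; linear_combination -h
        rw [hcongr]
        exact fiber_card_mul d hd _
      rw [Finset.sum_mul, Finset.sum_congr rfl (fun z _ => hzcount z), Finset.sum_const,
        smul_eq_mul, Finset.card_univ, card_E bE]
      calc q ^ 2 * q ^ ε ≤ (q + 1) * q * q ^ ε := by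
            refine Nat.mul_le_mul_right _ ?_
            rw [pow_two]
            exact Nat.mul_le_mul_right _ (by omega)
        _ = (q + 1) * (q ^ ε * q) := by ring
  -- final arithmetic
  rw [add_mul, part2, part1, hcardne]
  have hj1 : 1 ≤ q ^ j := Nat.one_le_pow _ _ hq0
  obtain ⟨X', hX'⟩ := Nat.exists_eq_add_of_le hj1
  have hpow1 : q ^ (2 * j + 1 + ε) = q ^ j * q ^ j * q * q ^ ε := by
    rw [show 2 * j + 1 + ε = (j + (j + 1)) + ε by ring, pow_add, pow_add, pow_add, pow_one]
    ring
  have hpow2 : q ^ (j + ε) = q ^ j * q ^ ε := pow_add q j ε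
  calc X₂ * q ^ j * q + q ^ 2 * q ^ ε * (q ^ j - 1) * q ^ j
      ≤ (q + 1) * (q ^ ε * q) * q ^ j + q ^ 2 * q ^ ε * (q ^ j - 1) * q ^ j := by
        refine Nat.add_le_add_right ?_ _
        calc X₂ * q ^ j * q = (X₂ * q) * q ^ j := by ring
          _ ≤ (q + 1) * (q ^ ε * q) * q ^ j := Nat.mul_le_mul_right _ hX2q
    _ = (q ^ (2 * j + 1 + ε) + q ^ (j + ε)) * q := by
        rw [hpow1, hpow2, hX', Nat.add_sub_cancel_left]
        ring

end Master
section Transport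
variable {F : Type} [Field F] [Fintype F] [DecidableEq F]

local notation "q" => Fintype.card F

lemma agree_card_le_of_equiv {m : ℕ} {D : Type} [Fintype D]
    [AddCommGroup D] [Module F D]
    (e : (Fin m → F) ≃ₗ[F] D) (f' : D → F) (B : ℕ)
    (hB : ∀ (φ : D →ₗ[F] F) (b : F),
      (Finset.univ.filter fun u : D => f' u = φ u + b).card ≤ B)
    (a : Fin m → F) (b : F) :
    (Finset.univ.filter fun v : Fin m → F =>
      f' (e v) = (∑ i, a i * v i) + b).card ≤ B := by
  classical
  let la : (Fin m → F) →ₗ[F] F :=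
    { toFun := fun v => ∑ i, a i * v i
      map_add' := by
        intro u v
        show ∑ i, a i * (u i + v i) = _
        rw [← Finset.sum_add_distrib]
        exact Finset.sum_congr rfl fun i _ => by ring
      map_smul' := by
        intro s v
        show ∑ i, a i * (s * v i) = s * ∑ i, a i * v i
        rw [Finset.mul_sum]
        exact Finset.sum_congr rfl fun i _ => by ring }
  set φ : D →ₗ[F] F := la.comp (e.symm : D →ₗ[F] (Fin m → F)) with hφ
  have hφe : ∀ v : Fin m → F, φ (e v) = ∑ i, a i * v i := by
    intro v
    rw [hφ, LinearMap.comp_apply]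
    have h1 : (e.symm : D →ₗ[F] (Fin m → F)) (e v) = v := e.symm_apply_apply v
    rw [h1]
    rfl
  have hcongr : (Finset.univ.filter fun v : Fin m → F =>
      f' (e v) = (∑ i, a i * v i) + b)
      = Finset.univ.filter fun v : Fin m → F => f' (e.toEquiv v) = φ (e.toEquiv v) + b := by
    refine Finset.filter_congr fun v _ => ?_
    rw [show e.toEquiv v = e v from rfl, hφe]
  rw [hcongr, card_filter_equiv (P := fun u : D => f' u = φ u + b) e.toEquiv]
  exact hB φ b

lemma m_one_count (a b : F) :
    (Finset.univ.filter fun x : F => x * x = a * x + b).card ≤ 2 := by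
  classical
  set P : Polynomial F := Polynomial.X ^ 2 - (Polynomial.C a * Polynomial.X + Polynomial.C b)
    with hP
  have hcoeff : P.coeff 2 = 1 := by
    rw [hP, Polynomial.coeff_sub, Polynomial.coeff_X_pow, if_pos rfl, Polynomial.coeff_add,
      Polynomial.coeff_C_mul, Polynomial.coeff_X, if_neg (by omega : ¬ (1 = 2)),
      Polynomial.coeff_C, if_neg (by omega : ¬ (2 = 0))]
    simp
  have hPne : P ≠ 0 := by
    intro h0
    rw [h0] at hcoeff
    simp at hcoeff
  have hdeg : P.natDegree ≤ 2 := by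
    refine le_trans (Polynomial.natDegree_sub_le _ _) (max_le ?_ ?_)
    · rw [Polynomial.natDegree_X_pow]
    · refine le_trans (Polynomial.natDegree_add_le _ _) (max_le ?_ ?_)
      · refine le_trans (Polynomial.natDegree_C_mul_le _ _) ?_
        rw [Polynomial.natDegree_X]
        omega
      · rw [Polynomial.natDegree_C]
        omega
  have hsub : Finset.univ.filter (fun x : F => x * x = a * x + b) ⊆ P.roots.toFinset := by
    intro x hx
    rw [Finset.mem_filter] at hx
    rw [Multiset.mem_toFinset, Polynomial.mem_roots hPne]
    simp only [Polynomial.IsRoot, hP, Polynomial.eval_sub, Polynomial.eval_add,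
      Polynomial.eval_mul, Polynomial.eval_C, Polynomial.eval_X, Polynomial.eval_pow]
    linear_combination hx.2
  exact le_trans (Finset.card_le_card hsub) (le_trans (Multiset.toFinset_card_le _)
    (le_trans (Polynomial.card_roots' P) hdeg))

/-- there is a function far from all affine functions -/
lemma exists_far_function (m : ℕ) (hm : 1 ≤ m) :
    ∃ f : (Fin m → F) → F, ∀ (a : Fin m → F) (b : F),
      (Finset.univ.filter fun v : Fin m → F => f v = (∑ i, a i * v i) + b).card
        ≤ q ^ (m - 1) + q ^ ((m + 1) / 2 - 1) := by
  classical
  rcases eq_or_lt_of_le hm with h1 | h2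
  · -- m = 1
    subst h1
    refine ⟨fun v => v 0 * v 0, fun a b => ?_⟩
    have hB : (Finset.univ.filter fun v : Fin 1 → F =>
        v 0 * v 0 = (∑ i, a i * v i) + b).card ≤ 2 := by
      have hcongr : (Finset.univ.filter fun v : Fin 1 → F =>
          v 0 * v 0 = (∑ i, a i * v i) + b)
          = Finset.univ.filter fun v : Fin 1 → F => v 0 * v 0 = a 0 * v 0 + b := by
        refine Finset.filter_congr fun v _ => ?_
        rw [Fin.sum_univ_one]
      rw [hcongr, ← card_filter_equiv (P := fun v : Fin 1 → F => v 0 * v 0 = a 0 * v 0 + b)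
        (Equiv.funUnique (Fin 1) F).symm]
      have hcongr2 : (Finset.univ.filter fun x : F =>
          ((Equiv.funUnique (Fin 1) F).symm x) 0 * ((Equiv.funUnique (Fin 1) F).symm x) 0
            = a 0 * ((Equiv.funUnique (Fin 1) F).symm x) 0 + b)
          = Finset.univ.filter fun x : F => x * x = a 0 * x + b := by
        refine Finset.filter_congr fun x _ => ?_
        rfl
      rw [hcongr2]
      exact m_one_count (a 0) b
    simpa using hB
  · -- m ≥ 2
    obtain ⟨c, hcirr, hcdeg⟩ := exists_irred_quadratic (F := F)
    set Pq : Polynomial F := Polynomial.X ^ 2 + Polynomial.X - Polynomial.C c with hPq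
    haveI : Fact (Irreducible Pq) := ⟨hcirr⟩
    set E := AdjoinRoot Pq with hEdef
    have hPq0 : Pq ≠ 0 := fun h => by simp [h] at hcdeg
    let pb := AdjoinRoot.powerBasis hPq0
    have hdim : pb.dim = 2 := hcdeg
    let bE : Module.Basis (Fin 2) F E := pb.basis.reindex (finCongr hdim)
    haveI : Fintype E := Fintype.ofEquiv (Fin 2 → F) bE.equivFun.toEquiv.symm
    haveI : DecidableEq E := Classical.decEq E
    have hνex : ∀ z : E, ∃ s : F, algebraMap F E s = z ^ (q + 1) := by
      intro z
      apply mem_range_of_pow_q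
      calc (z ^ (q + 1)) ^ q = ((z ^ q) * z) ^ q := by rw [← pow_succ]
        _ = (z ^ q) ^ q * z ^ q := mul_pow _ _ _
        _ = z * z ^ q := by rw [pow_q_q bE]
        _ = z ^ (q + 1) := by rw [pow_succ, mul_comm]
    set ν : E → F := fun z => Classical.choose (hνex z) with hνdef
    have hν : ∀ z : E, algebraMap F E (ν z) = z ^ (q + 1) :=
      fun z => Classical.choose_spec (hνex z)
    set j := (m - 2) / 2 with hj
    set ε := (m - 2) % 2 with hε
    have hm'' : m = ((2 + ε) + j) + j := by omega
    have hexp1 : 2 * j + 1 + ε = m - 1 := by omega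
    have hexp2 : j + ε = (m + 1) / 2 - 1 := by omega
    let eI : Fin m ≃ ((Fin 2 ⊕ Fin ε) ⊕ Fin j) ⊕ Fin j :=
      (finCongr hm'').trans <| finSumFinEquiv.symm.trans <| Equiv.sumCongr
        (finSumFinEquiv.symm.trans <| Equiv.sumCongr
          (finSumFinEquiv.symm.trans <| Equiv.sumCongr (Equiv.refl (Fin 2)) (Equiv.refl (Fin ε)))
          (Equiv.refl (Fin j)))
        (Equiv.refl (Fin j))
    let e : (Fin m → F) ≃ₗ[F] (((E × (Fin ε → F)) × (Fin j → F)) × (Fin j → F)) :=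
      (LinearEquiv.funCongrLeft F F eI.symm).trans <|
        (LinearEquiv.sumArrowLequivProdArrow _ _ F F).trans <|
          LinearEquiv.prodCongr
            ((LinearEquiv.sumArrowLequivProdArrow _ _ F F).trans <|
              LinearEquiv.prodCongr
                ((LinearEquiv.sumArrowLequivProdArrow _ _ F F).trans <|
                  LinearEquiv.prodCongr (bE.equivFun.symm) (LinearEquiv.refl F (Fin ε → F)))
                (LinearEquiv.refl F (Fin j → F)))
            (LinearEquiv.refl F (Fin j → F))
    let f' : (((E × (Fin ε → F)) × (Fin j → F)) × (Fin j → F)) → F :=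
      fun u => ν u.1.1.1 + ∑ i, u.2 i * u.1.2 i
    refine ⟨fun v => f' (e v), fun a b => ?_⟩
    have hbound := agree_card_le_of_equiv e f' (q ^ (2 * j + 1 + ε) + q ^ (j + ε))
      (fun φ b' => master bE ν hν j ε φ b') a b
    rw [hexp1, hexp2] at hbound
    exact hbound

end Transport
/-- The covering radius of the first-order generalized Reed–Muller code `R_q(1,m)`. -/
noncomputable def rmCoveringRadius (F : Type) [Field F] [Fintype F] [DecidableEq F]
    (m : ℕ) : ℕ :=
  Finset.univ.sup fun f : (Fin m → F) → F =>
    sInf {d : ℕ | ∃ a : Fin m → F, ∃ b : F,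
      d = hammingDist f (fun x => (∑ i, a i * x i) + b)}

/-- `ρ(1,m) ≥ (q-1)q^{m-1} - q^{⌈m/2⌉-1}` (note `⌈m/2⌉ = (m+1)/2`). -/
theorem rmCoveringRadius_ge
    {F : Type} [Field F] [Fintype F] [DecidableEq F] {m : ℕ} (hm : 1 ≤ m) :
    ((Fintype.card F : ℝ) - 1) * (Fintype.card F : ℝ) ^ (m - 1)
        - (Fintype.card F : ℝ) ^ ((m + 1) / 2 - 1) ≤ (rmCoveringRadius F m : ℝ) := by
  classical
  obtain ⟨f, hf⟩ := exists_far_function (F := F) m hm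
  have hSne : {d : ℕ | ∃ a : Fin m → F, ∃ b : F,
      d = hammingDist f (fun x => (∑ i, a i * x i) + b)}.Nonempty := ⟨_, 0, 0, rfl⟩
  have hmem := Nat.sInf_mem hSne
  obtain ⟨a, b, hab⟩ := hmem
  have hsup : sInf {d : ℕ | ∃ a : Fin m → F, ∃ b : F,
      d = hammingDist f (fun x => (∑ i, a i * x i) + b)} ≤ rmCoveringRadius F m :=
    Finset.le_sup (f := fun g : (Fin m → F) → F => sInf {d : ℕ | ∃ a : Fin m → F, ∃ b : F,
      d = hammingDist g (fun x => (∑ i, a i * x i) + b)}) (Finset.mem_univ f)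
  have hagree := hf a b
  have htotal : hammingDist f (fun x => (∑ i, a i * x i) + b)
      + (Finset.univ.filter fun v : Fin m → F => f v = (∑ i, a i * v i) + b).card
      = Fintype.card F ^ m := by
    have hsplit := Finset.card_filter_add_card_filter_not
      (s := (Finset.univ : Finset (Fin m → F)))
      (p := fun v : Fin m → F => f v = (∑ i, a i * v i) + b)
    have hdd : hammingDist f (fun x => (∑ i, a i * x i) + b)
        = (Finset.univ.filter fun v : Fin m → F =>
            ¬ (f v = (∑ i, a i * v i) + b)).card := rfl
    rw [Finset.card_univ, Fintype.card_fun, Fintype.card_fin] at hsplit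
    rw [hdd, add_comm]
    exact hsplit
  have h1 : Fintype.card F ^ m ≤ rmCoveringRadius F m
      + (Fintype.card F ^ (m - 1) + Fintype.card F ^ ((m + 1) / 2 - 1)) := by
    have hd1 : hammingDist f (fun x => (∑ i, a i * x i) + b) ≤ rmCoveringRadius F m :=
      hab ▸ hsup
    calc Fintype.card F ^ m
        = hammingDist f (fun x => (∑ i, a i * x i) + b)
          + (Finset.univ.filter fun v : Fin m → F =>
              f v = (∑ i, a i * v i) + b).card := htotal.symm
      _ ≤ rmCoveringRadius F m
          + (Fintype.card F ^ (m - 1) + Fintype.card F ^ ((m + 1) / 2 - 1)) :=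
        Nat.add_le_add hd1 hagree
  have h1r : ((Fintype.card F : ℝ)) ^ m ≤ (rmCoveringRadius F m : ℝ)
      + ((Fintype.card F : ℝ) ^ (m - 1) + (Fintype.card F : ℝ) ^ ((m + 1) / 2 - 1)) := by
    exact_mod_cast h1
  have hQm : ((Fintype.card F : ℝ)) ^ m
      = (Fintype.card F : ℝ) ^ (m - 1) * (Fintype.card F : ℝ) := by
    conv_lhs => rw [show m = (m - 1) + 1 from (Nat.sub_add_cancel hm).symm]
    rw [pow_succ]
  have key : ((Fintype.card F : ℝ) - 1) * (Fintype.card F : ℝ) ^ (m - 1)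
      = (Fintype.card F : ℝ) ^ m - (Fintype.card F : ℝ) ^ (m - 1) := by
    rw [hQm]
    ring
  rw [key]
  linarith
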